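/- Let p ∈ (1,∞) and let X be a real Banach space that satisfies the hypercube Stein inequality with constant 𝔰 for exponent p and the hypercube UMD⁻ inequality with constant β for exponent p. Then for every positive integer n and every function f : 𝒞_n → X, one has ‖f − 2^{−n} Σ_{δ∈𝒞_n} f(δ)‖_{L_p(𝒞_n;X)} ≤ 𝔰 β (2^{−n} Σ_{δ∈𝒞_n} ‖Σ_{i=1}^n δ_i ∂_i f‖_{L_p(𝒞_n;X)}^p)^{1/p}; that is, Pisier's inequality holds for X with a constant 𝔰β independent of the dimension n. -/

import Mathlib

noncomputable section

open Finset

/-- The sign `±1` attached to a boolean coordinate of the discrete cube. -/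
def sgn (b : Bool) : ℝ := if b then 1 else -1

variable {X : Type*} [NormedAddCommGroup X] [NormedSpace ℝ X]

/-- `L_p` norm of `f : 𝒞_n → X` with respect to the uniform probability measure. -/
def cubeLpNorm (n : ℕ) (p : ℝ) (f : (Fin n → Bool) → X) : ℝ :=
  (((2 : ℝ) ^ n)⁻¹ * ∑ ε : Fin n → Bool, ‖f ε‖ ^ p) ^ (1 / p)

/-- Conditional expectation given the coordinates in `S`: average of `f η` over all
`η` agreeing with `ε` on `S`. -/
def cubeCondExp (n : ℕ) (S : Finset (Fin n)) (f : (Fin n → Bool) → X) :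
    (Fin n → Bool) → X := fun ε =>
  ((2 : ℝ) ^ (n - S.card))⁻¹ •
    ∑ η ∈ univ.filter (fun η : Fin n → Bool => ∀ j ∈ S, η j = ε j), f η

/-- The set of the first `i` coordinates (`0`-based). -/
def firstIdx (n i : ℕ) : Finset (Fin n) := univ.filter fun j => (j : ℕ) < i

/-- `𝔈_i`: conditioning on the first `i` coordinates. -/
def Ei (n i : ℕ) (f : (Fin n → Bool) → X) : (Fin n → Bool) → X :=
  cubeCondExp n (firstIdx n i) f

/-- `𝔈_i^π`: conditioning on the coordinates `π(1),…,π(i)`. -/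
def Epi (n : ℕ) (π : Equiv.Perm (Fin n)) (i : ℕ) (f : (Fin n → Bool) → X) :
    (Fin n → Bool) → X :=
  cubeCondExp n ((firstIdx n i).image π) f

/-- `∂_i`: the `i`-th discrete partial derivative. -/
def cubeDeriv (n : ℕ) (i : Fin n) (f : (Fin n → Bool) → X) : (Fin n → Bool) → X :=
  fun ε => (2 : ℝ)⁻¹ • (f ε - f (Function.update ε i (!(ε i))))

/-- `X` satisfies the hypercube Stein inequality with constant `s` for exponent `p`. -/
def SteinIneq (X : Type*) [NormedAddCommGroup X] [NormedSpace ℝ X] (p s : ℝ) : Prop :=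
  ∀ m : ℕ, 0 < m → ∀ (π : Equiv.Perm (Fin m)) (g : Fin m → (Fin m → Bool) → X),
    (((2 : ℝ) ^ m)⁻¹ * ∑ δ : Fin m → Bool,
        (cubeLpNorm m p fun ε => ∑ i : Fin m, sgn (δ i) • Epi m π ((i : ℕ) + 1) (g i) ε) ^ p) ^ (1 / p)
      ≤ s * (((2 : ℝ) ^ m)⁻¹ * ∑ δ : Fin m → Bool,
        (cubeLpNorm m p fun ε => ∑ i : Fin m, sgn (δ i) • g i ε) ^ p) ^ (1 / p)

/-- `X` satisfies the hypercube UMD⁻ inequality with constant `b` for exponent `p`. -/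
def UMDminusIneq (X : Type*) [NormedAddCommGroup X] [NormedSpace ℝ X] (p b : ℝ) : Prop :=
  ∀ m : ℕ, 0 < m → ∀ (π : Equiv.Perm (Fin m)) (d : Fin m → (Fin m → Bool) → X),
    (∀ i : Fin m, Epi m π ((i : ℕ) + 1) (d i) = d i ∧ Epi m π (i : ℕ) (d i) = 0) →
    cubeLpNorm m p (fun ε => ∑ i : Fin m, d i ε)
      ≤ b * (((2 : ℝ) ^ m)⁻¹ * ∑ δ : Fin m → Bool,
        (cubeLpNorm m p fun ε => ∑ i : Fin m, sgn (δ i) • d i ε) ^ p) ^ (1 / p)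

/-- The Walsh function `w_A`. -/
def walsh (n : ℕ) (A : Finset (Fin n)) (ε : Fin n → Bool) : ℝ := ∏ i ∈ A, sgn (ε i)

/-- The Walsh coefficient `f̂(A)`. -/
def walshCoeff (n : ℕ) (f : (Fin n → Bool) → X) (A : Finset (Fin n)) : X :=
  ((2 : ℝ) ^ n)⁻¹ • ∑ ε : Fin n → Bool, walsh n A ε • f ε

/-- `Δ⁻¹∂_i f = Σ_{A ∋ i} |A|⁻¹ f̂(A) w_A`. -/
def invLapDeriv (n : ℕ) (i : Fin n) (f : (Fin n → Bool) → X) : (Fin n → Bool) → X :=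
  fun ε => ∑ A ∈ univ.filter (fun A : Finset (Fin n) => i ∈ A),
    ((A.card : ℝ)⁻¹ * walsh n A ε) • walshCoeff n f A

variable {n : ℕ}


lemma fiber_card (S : Finset (Fin n)) (ε : Fin n → Bool) :
    (univ.filter fun η : Fin n → Bool => ∀ j ∈ S, η j = ε j).card = 2 ^ (n - S.card) := by
  have h : (univ.filter fun η : Fin n → Bool => ∀ j ∈ S, η j = ε j)
      = Fintype.piFinset (fun j => if j ∈ S then ({ε j} : Finset Bool) else univ) := by
    ext η
    simp only [mem_filter, mem_univ, true_and, Fintype.mem_piFinset]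
    constructor
    · intro h j
      by_cases hj : j ∈ S <;> simp [hj, h j]
    · intro h j hj
      have := h j
      simpa [hj] using this
  rw [h, Fintype.card_piFinset]
  have h2 : ∀ j, (if j ∈ S then ({ε j} : Finset Bool) else univ).card
      = if j ∈ S then 1 else 2 := by
    intro j; split <;> simp
  simp_rw [h2]
  rw [Finset.prod_ite, Finset.prod_const, Finset.prod_const, one_pow, one_mul]
  congr 1
  rw [Finset.filter_not, Finset.filter_mem_eq_inter, Finset.univ_inter,
    Finset.card_sdiff_of_subset (Finset.subset_univ S), Finset.card_fin]

lemma condExp_congr (S : Finset (Fin n)) (f : (Fin n → Bool) → X) {ε ε' : Fin n → Bool}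
    (h : ∀ j ∈ S, ε j = ε' j) : cubeCondExp n S f ε = cubeCondExp n S f ε' := by
  unfold cubeCondExp
  congr 2
  apply Finset.filter_congr
  intro η _
  constructor <;> intro hh j hj
  · rw [hh j hj]; exact h j hj
  · rw [hh j hj]; exact (h j hj).symm

lemma condExp_of_measurable {S T : Finset (Fin n)} (hST : S ⊆ T) (g : (Fin n → Bool) → X)
    (hg : ∀ ε η : Fin n → Bool, (∀ j ∈ S, η j = ε j) → g η = g ε) :
    cubeCondExp n T g = g := by
  funext ε
  unfold cubeCondExp
  have hc : ∀ η ∈ (univ.filter fun η : Fin n → Bool => ∀ j ∈ T, η j = ε j), g η = g ε := by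
    intro η hη
    simp only [mem_filter, mem_univ, true_and] at hη
    exact hg ε η fun j hj => hη j (hST hj)
  rw [Finset.sum_congr rfl hc,
    Finset.sum_const, fiber_card, ← Nat.cast_smul_eq_nsmul ℝ, smul_smul]
  push_cast
  rw [inv_mul_cancel₀ (by positivity), one_smul]

lemma condExp_sub (S : Finset (Fin n)) (u v : (Fin n → Bool) → X) :
    cubeCondExp n S (fun η => u η - v η)
      = fun ε => cubeCondExp n S u ε - cubeCondExp n S v ε := by
  funext ε
  unfold cubeCondExp
  rw [Finset.sum_sub_distrib, smul_sub]

lemma condExp_smul (S : Finset (Fin n)) (c : ℝ) (u : (Fin n → Bool) → X) :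
    cubeCondExp n S (fun η => c • u η) = fun ε => c • cubeCondExp n S u ε := by
  funext ε
  unfold cubeCondExp
  rw [← Finset.smul_sum, smul_comm]

lemma cube_flip_flip (η : Fin n → Bool) (i : Fin n) :
    Function.update (Function.update η i (!(η i))) i
      (!(Function.update η i (!(η i)) i)) = η := by
  simp [Function.update_idem]

lemma condExp_flip (S : Finset (Fin n)) (i : Fin n) (f : (Fin n → Bool) → X)
    (ε : Fin n → Bool) :
    cubeCondExp n S (fun η => f (Function.update η i (!(η i)))) ε
      = cubeCondExp n S f (Function.update ε i (!(ε i))) := by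
  unfold cubeCondExp
  congr 1
  refine Finset.sum_nbij' (fun η => Function.update η i (!(η i)))
    (fun η => Function.update η i (!(η i))) ?_ ?_ ?_ ?_ ?_
  · intro η hη
    simp only [mem_filter, mem_univ, true_and] at hη ⊢
    intro j hj
    by_cases hji : j = i
    · subst hji
      simp only [Function.update_self]
      rw [hη j hj]
    · rw [Function.update_of_ne hji, Function.update_of_ne hji]
      exact hη j hj
  · intro η hη
    simp only [mem_filter, mem_univ, true_and] at hη ⊢
    intro j hj
    by_cases hji : j = i
    · subst hji
      have := hη j hj
      simp only [Function.update_self] at this ⊢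
      rw [this]; simp
    · have := hη j hj
      rw [Function.update_of_ne hji] at this
      rw [Function.update_of_ne hji]
      exact this
  · intro η _; exact cube_flip_flip η i
  · intro η _; exact cube_flip_flip η i
  · intro η _; rfl

lemma condExp_erase (S : Finset (Fin n)) (i : Fin n) (hi : i ∈ S)
    (f : (Fin n → Bool) → X) (ε : Fin n → Bool) :
    cubeCondExp n (S.erase i) f ε
      = (2 : ℝ)⁻¹ • (cubeCondExp n S f ε
          + cubeCondExp n S f (Function.update ε i (!(ε i)))) := by
  unfold cubeCondExp
  have hsplit : (univ.filter fun η : Fin n → Bool => ∀ j ∈ S.erase i, η j = ε j)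
      = (univ.filter fun η : Fin n → Bool => ∀ j ∈ S, η j = ε j)
        ∪ (univ.filter fun η : Fin n → Bool =>
            ∀ j ∈ S, η j = Function.update ε i (!(ε i)) j) := by
    ext η
    simp only [mem_filter, mem_univ, true_and, mem_union]
    constructor
    · intro h
      rcases Bool.eq_or_eq_not (η i) (ε i) with hc | hc
      · left
        intro j hj
        by_cases hji : j = i
        · subst hji; exact hc
        · exact h j (Finset.mem_erase.2 ⟨hji, hj⟩)
      · right
        intro j hj
        by_cases hji : j = i
        · subst hji; simp [Function.update_self, hc]
        · rw [Function.update_of_ne hji]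
          exact h j (Finset.mem_erase.2 ⟨hji, hj⟩)
    · rintro (h | h) j hj
      · exact h j (Finset.mem_of_mem_erase hj)
      · have := h j (Finset.mem_of_mem_erase hj)
        rwa [Function.update_of_ne (Finset.ne_of_mem_erase hj)] at this
  have hdisj : Disjoint
      (univ.filter fun η : Fin n → Bool => ∀ j ∈ S, η j = ε j)
      (univ.filter fun η : Fin n → Bool =>
        ∀ j ∈ S, η j = Function.update ε i (!(ε i)) j) := by
    rw [Finset.disjoint_left]
    intro η h1 h2
    simp only [mem_filter, mem_univ, true_and] at h1 h2
    have e1 := h1 i hi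
    have e2 := h2 i hi
    rw [Function.update_self] at e2
    rw [e1] at e2
    exact (Bool.eq_not_self (ε i)).mp e2
  have hcard : n - (S.erase i).card = (n - S.card) + 1 := by
    have h1 : 1 ≤ S.card := Finset.card_pos.2 ⟨i, hi⟩
    have h2 : S.card ≤ n := by
      simpa using Finset.card_le_univ S
    rw [Finset.card_erase_of_mem hi]
    omega
  rw [hsplit, Finset.sum_union hdisj, hcard, smul_add, smul_add, smul_smul, smul_smul,
    pow_succ]
  congr 1 <;> congr 1 <;> ring

lemma firstIdx_zero : firstIdx n 0 = ∅ := by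
  ext j; simp [firstIdx]

lemma firstIdx_self : firstIdx n n = univ := by
  ext j; simp [firstIdx, j.isLt]

lemma firstIdx_succ (i : Fin n) :
    (firstIdx n ((i : ℕ) + 1)).erase i = firstIdx n (i : ℕ) := by
  ext j
  simp only [firstIdx, Finset.mem_erase, mem_filter, mem_univ, true_and]
  constructor
  · rintro ⟨hne, hlt⟩
    have : (j : ℕ) ≠ (i : ℕ) := fun h => hne (Fin.ext h)
    omega
  · intro h
    exact ⟨fun he => by subst he; omega, by omega⟩

lemma mem_firstIdx_succ (i : Fin n) : i ∈ firstIdx n ((i : ℕ) + 1) := by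
  simp [firstIdx]

lemma Epi_one (i : ℕ) (f : (Fin n → Bool) → X) : Epi n 1 i f = Ei n i f := by
  unfold Epi Ei
  congr 1
  simp [Finset.image_id']

lemma Ei_n (f : (Fin n → Bool) → X) : Ei n n f = f := by
  funext ε
  unfold Ei cubeCondExp
  rw [firstIdx_self]
  have : (univ.filter fun η : Fin n → Bool => ∀ j ∈ (univ : Finset (Fin n)), η j = ε j)
      = {ε} := by
    ext η
    simp only [mem_filter, mem_univ, true_and, Finset.mem_singleton]
    constructor
    · intro h; funext j; simpa using h j
    · rintro rfl j _; rfl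
  rw [this, Finset.sum_singleton, Finset.card_fin]
  simp

lemma Ei_zero (f : (Fin n → Bool) → X) (ε : Fin n → Bool) :
    Ei n 0 f ε = ((2 : ℝ) ^ n)⁻¹ • ∑ δ : Fin n → Bool, f δ := by
  unfold Ei cubeCondExp
  rw [firstIdx_zero]
  simp

lemma firstIdx_mono {i k : ℕ} (h : i ≤ k) : firstIdx n i ⊆ firstIdx n k := by
  intro j hj
  simp only [firstIdx, mem_filter, mem_univ, true_and] at hj ⊢
  omega

lemma Ei_meas (i : ℕ) (f : (Fin n → Bool) → X) {ε η : Fin n → Bool}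
    (h : ∀ j ∈ firstIdx n i, η j = ε j) : Ei n i f η = Ei n i f ε :=
  condExp_congr _ f h

lemma Ei_Ei {i k : ℕ} (h : i ≤ k) (f : (Fin n → Bool) → X) :
    Ei n k (Ei n i f) = Ei n i f :=
  condExp_of_measurable (firstIdx_mono h) _ (fun _ _ hh => Ei_meas i f hh)

lemma Ei_step (i : Fin n) (f : (Fin n → Bool) → X) (ε : Fin n → Bool) :
    Ei n (i : ℕ) f ε = (2 : ℝ)⁻¹ • (Ei n ((i : ℕ) + 1) f ε
      + Ei n ((i : ℕ) + 1) f (Function.update ε i (!(ε i)))) := by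
  unfold Ei
  rw [← firstIdx_succ i]
  exact condExp_erase _ i (mem_firstIdx_succ i) f ε

lemma Ei_tower (i : Fin n) (f : (Fin n → Bool) → X) :
    Ei n (i : ℕ) (Ei n ((i : ℕ) + 1) f) = Ei n (i : ℕ) f := by
  funext ε
  rw [Ei_step i (Ei n ((i : ℕ) + 1) f) ε, Ei_Ei (le_refl _) f, ← Ei_step i f ε]

lemma Ei_deriv (i : Fin n) (f : (Fin n → Bool) → X) :
    Ei n ((i : ℕ) + 1) (cubeDeriv n i f)
      = fun ε => Ei n ((i : ℕ) + 1) f ε - Ei n (i : ℕ) f ε := by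
  funext ε
  have step1 : Ei n ((i : ℕ) + 1) (cubeDeriv n i f) ε
      = (2 : ℝ)⁻¹ • (Ei n ((i : ℕ) + 1) f ε
          - Ei n ((i : ℕ) + 1) f (Function.update ε i (!(ε i)))) := by
    show cubeCondExp n (firstIdx n ((i : ℕ) + 1))
        (fun η => (2 : ℝ)⁻¹ • (f η - f (Function.update η i (!(η i))))) ε = _
    rw [condExp_smul, condExp_sub]
    show (2 : ℝ)⁻¹ • (cubeCondExp n (firstIdx n ((i : ℕ) + 1)) f ε
        - cubeCondExp n (firstIdx n ((i : ℕ) + 1))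
            (fun η => f (Function.update η i (!(η i)))) ε) = _
    rw [condExp_flip]
    rfl
  rw [step1, Ei_step i f ε]
  set A := Ei n ((i : ℕ) + 1) f ε
  set B := Ei n ((i : ℕ) + 1) f (Function.update ε i (!(ε i)))
  have h2 : A = (2 : ℝ)⁻¹ • A + (2 : ℝ)⁻¹ • A := by
    rw [← add_smul]; norm_num
  rw [smul_sub, smul_add, sub_add_eq_sub_sub]
  nth_rewrite 2 [h2]
  abel


/-- **Pisier's inequality with dimension-free constant** for Banach spaces satisfying the
hypercube Stein and UMD⁻ inequalities: `‖f − 𝔼f‖_p ≤ s·b·(2⁻ⁿ Σ_δ ‖Σᵢ δᵢ∂ᵢf‖_p^p)^{1/p}`. -/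
theorem pisier_inequality_umd (p s b : ℝ) (hp : 1 < p) (hs : 0 < s) (hb : 0 < b)
    (X : Type*) [NormedAddCommGroup X] [NormedSpace ℝ X] [CompleteSpace X]
    (hStein : SteinIneq X p s) (hUMD : UMDminusIneq X p b)
    (n : ℕ) (hn : 0 < n) (f : (Fin n → Bool) → X) :
    cubeLpNorm n p (fun ε => f ε - ((2 : ℝ) ^ n)⁻¹ • ∑ δ : Fin n → Bool, f δ)
      ≤ s * b * (((2 : ℝ) ^ n)⁻¹ * ∑ δ : Fin n → Bool,
          (cubeLpNorm n p fun ε =>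
            ∑ i : Fin n, sgn (δ i) • cubeDeriv n i f ε) ^ p) ^ (1 / p) := by
  have hcond : ∀ i : Fin n,
      Epi n 1 ((i : ℕ) + 1) (fun ε => Ei n ((i : ℕ) + 1) f ε - Ei n (i : ℕ) f ε)
        = (fun ε => Ei n ((i : ℕ) + 1) f ε - Ei n (i : ℕ) f ε)
      ∧ Epi n 1 (i : ℕ) (fun ε => Ei n ((i : ℕ) + 1) f ε - Ei n (i : ℕ) f ε) = 0 := by
    intro i
    constructor
    · rw [Epi_one]
      show cubeCondExp n (firstIdx n ((i : ℕ) + 1)) _ = _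
      rw [condExp_sub]
      have h1 : cubeCondExp n (firstIdx n ((i : ℕ) + 1)) (Ei n ((i : ℕ) + 1) f)
          = Ei n ((i : ℕ) + 1) f := Ei_Ei (le_refl _) f
      have h2 : cubeCondExp n (firstIdx n ((i : ℕ) + 1)) (Ei n (i : ℕ) f)
          = Ei n (i : ℕ) f := Ei_Ei (Nat.le_succ _) f
      rw [h1, h2]
    · rw [Epi_one]
      show cubeCondExp n (firstIdx n (i : ℕ)) _ = _
      rw [condExp_sub]
      have h1 : cubeCondExp n (firstIdx n (i : ℕ)) (Ei n ((i : ℕ) + 1) f)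
          = Ei n (i : ℕ) f := Ei_tower i f
      have h2 : cubeCondExp n (firstIdx n (i : ℕ)) (Ei n (i : ℕ) f)
          = Ei n (i : ℕ) f := Ei_Ei (le_refl _) f
      rw [h1, h2]
      funext ε
      simp
  have h1 := hUMD n hn 1
    (fun i ε => Ei n ((i : ℕ) + 1) f ε - Ei n (i : ℕ) f ε) hcond
  have h2 := hStein n hn 1 (fun i => cubeDeriv n i f)
  have htel : (fun ε => ∑ i : Fin n, (Ei n ((i : ℕ) + 1) f ε - Ei n (i : ℕ) f ε))
      = (fun ε => f ε - ((2 : ℝ) ^ n)⁻¹ • ∑ δ : Fin n → Bool, f δ) := by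
    funext ε
    rw [Fin.sum_univ_eq_sum_range (fun k => Ei n (k + 1) f ε - Ei n k f ε) n,
      Finset.sum_range_sub (fun k => Ei n k f ε), Ei_n, Ei_zero]
  have hmid : ∀ (δ : Fin n → Bool),
      (fun ε => ∑ i : Fin n, sgn (δ i) • (Ei n ((i : ℕ) + 1) f ε - Ei n (i : ℕ) f ε))
        = (fun ε => ∑ i : Fin n, sgn (δ i) • Epi n 1 ((i : ℕ) + 1) (cubeDeriv n i f) ε) := by
    intro δ
    funext ε
    apply Finset.sum_congr rfl
    intro i _
    rw [Epi_one, Ei_deriv]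
  calc cubeLpNorm n p (fun ε => f ε - ((2 : ℝ) ^ n)⁻¹ • ∑ δ : Fin n → Bool, f δ)
      = cubeLpNorm n p (fun ε => ∑ i : Fin n,
          (Ei n ((i : ℕ) + 1) f ε - Ei n (i : ℕ) f ε)) := by rw [htel]
    _ ≤ b * (((2 : ℝ) ^ n)⁻¹ * ∑ δ : Fin n → Bool,
          (cubeLpNorm n p fun ε => ∑ i : Fin n,
            sgn (δ i) • (Ei n ((i : ℕ) + 1) f ε - Ei n (i : ℕ) f ε)) ^ p) ^ (1 / p) := h1
    _ = b * (((2 : ℝ) ^ n)⁻¹ * ∑ δ : Fin n → Bool,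
          (cubeLpNorm n p fun ε => ∑ i : Fin n,
            sgn (δ i) • Epi n 1 ((i : ℕ) + 1) (cubeDeriv n i f) ε) ^ p) ^ (1 / p) := by
        simp only [hmid]
    _ ≤ b * (s * (((2 : ℝ) ^ n)⁻¹ * ∑ δ : Fin n → Bool,
          (cubeLpNorm n p fun ε =>
            ∑ i : Fin n, sgn (δ i) • cubeDeriv n i f ε) ^ p) ^ (1 / p)) :=
        mul_le_mul_of_nonneg_left h2 hb.le
    _ = s * b * (((2 : ℝ) ^ n)⁻¹ * ∑ δ : Fin n → Bool,
          (cubeLpNorm n p fun ε =>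
            ∑ i : Fin n, sgn (δ i) • cubeDeriv n i f ε) ^ p) ^ (1 / p) := by ring
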